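/- Let I be a strongly stable monomial ideal of S. Then the integral closure Ī of I is again a strongly stable monomial ideal. -/

import Mathlib

open MvPolynomial

/-- An ideal of `K[x_1, …, x_n]` is a monomial ideal if it is generated by monomials. -/
def IsMonomialIdeal {K : Type*} [Field K] {n : ℕ} (I : Ideal (MvPolynomial (Fin n) K)) : Prop :=
  ∃ G : Set (Fin n →₀ ℕ),
    I = Ideal.span ((fun a => (monomial a (1 : K) : MvPolynomial (Fin n) K)) '' G)

/-- A monomial ideal `I` is strongly stable if for every monomial `u ∈ I` and all
indices `i < j` with `x_j ∣ u`, one has `x_i * (u / x_j) ∈ I`. -/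
def IsStronglyStable {K : Type*} [Field K] {n : ℕ}
    (I : Ideal (MvPolynomial (Fin n) K)) : Prop :=
  ∀ a : Fin n →₀ ℕ, (monomial a (1 : K) : MvPolynomial (Fin n) K) ∈ I →
    ∀ i j : Fin n, i < j → 1 ≤ a j →
      (monomial (a - Finsupp.single j 1 + Finsupp.single i 1) (1 : K) :
        MvPolynomial (Fin n) K) ∈ I

/-- The integral closure of a monomial ideal `I`: the ideal generated by all
monomials `u` such that `u ^ k ∈ I ^ k` for some integer `k ≥ 1`. -/
noncomputable def monomialIntegralClosure {K : Type*} [Field K] {n : ℕ}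
    (I : Ideal (MvPolynomial (Fin n) K)) : Ideal (MvPolynomial (Fin n) K) :=
  Ideal.span {m | ∃ a : Fin n →₀ ℕ, m = (monomial a (1 : K) : MvPolynomial (Fin n) K) ∧
    ∃ k : ℕ, 1 ≤ k ∧ m ^ k ∈ I ^ k}

section Aux

variable {K : Type*} [Field K] {n : ℕ}

lemma aux_apply (a : Fin n →₀ ℕ) (j i : Fin n) (s t : ℕ) (x : Fin n) :
    (a - Finsupp.single j s + Finsupp.single i t) x
      = a x - (if j = x then s else 0) + (if i = x then t else 0) := by
  simp [Finsupp.tsub_apply, Finsupp.single_apply]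

lemma aux_le1 {i j : Fin n} (hne : i ≠ j) {c a : Fin n →₀ ℕ} (hca : c ≤ a) (hj : c j < a j) :
    c ≤ a - Finsupp.single j 1 + Finsupp.single i 1 := by
  rw [Finsupp.le_def]
  intro x
  rw [aux_apply]
  have hx := Finsupp.le_def.mp hca x
  rcases eq_or_ne j x with rfl | hjx
  · simp [hne]
    omega
  · rcases eq_or_ne i x with rfl | hix
    · simp [hjx]
      omega
    · simp [hjx, hix]
      omega

lemma aux_le2 {i j : Fin n} {c a : Fin n →₀ ℕ} (hca : c ≤ a) :
    c - Finsupp.single j 1 + Finsupp.single i 1 ≤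
      a - Finsupp.single j 1 + Finsupp.single i 1 :=
  add_le_add (tsub_le_tsub_right hca _) le_rfl

lemma aux_le3 {i j : Fin n} (hne : i ≠ j) {g h a : Fin n →₀ ℕ} (hga : g + h ≤ a)
    (hgj : 1 ≤ g j) :
    (g - Finsupp.single j 1 + Finsupp.single i 1) + h ≤
      a - Finsupp.single j 1 + Finsupp.single i 1 := by
  rw [Finsupp.le_def]
  intro x
  have hx : g x + h x ≤ a x := by simpa using Finsupp.le_def.mp hga x
  rw [Finsupp.add_apply, aux_apply, aux_apply]
  rcases eq_or_ne j x with rfl | hjx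
  · simp [hne]
    have hxj : g j + h j ≤ a j := by simpa using Finsupp.le_def.mp hga j
    omega
  · rcases eq_or_ne i x with rfl | hix
    · simp [hjx]
      omega
    · simp [hjx, hix]
      omega

/-- Membership of a monomial in a monomial ideal is divisibility by a generator. -/
lemma aux_mem_span_iff (G : Set (Fin n →₀ ℕ)) (a : Fin n →₀ ℕ) :
    (monomial a (1 : K) : MvPolynomial (Fin n) K) ∈
        Ideal.span ((fun b => (monomial b (1 : K) : MvPolynomial (Fin n) K)) '' G) ↔
      ∃ b ∈ G, b ≤ a := by
  rw [mem_ideal_span_monomial_image]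
  simp [support_monomial, (one_ne_zero : (1 : K) ≠ 0)]

/-- Absorption: a monomial divisible by a monomial in an ideal is in the ideal. -/
lemma aux_dvd_mem {J : Ideal (MvPolynomial (Fin n) K)} {a b : Fin n →₀ ℕ}
    (h : (monomial b (1 : K) : MvPolynomial (Fin n) K) ∈ J) (hba : b ≤ a) :
    (monomial a (1 : K) : MvPolynomial (Fin n) K) ∈ J := by
  have := J.mul_mem_left (monomial (a - b) 1) h
  rwa [monomial_mul, one_mul, tsub_add_cancel_of_le hba] at this

/-- The product of strongly stable monomial ideals is a strongly stable monomial ideal. -/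
lemma aux_mul {I J : Ideal (MvPolynomial (Fin n) K)}
    (hI : IsMonomialIdeal I) (hJ : IsMonomialIdeal J)
    (hsI : IsStronglyStable I) (hsJ : IsStronglyStable J) :
    IsMonomialIdeal (I * J) ∧ IsStronglyStable (I * J) := by
  obtain ⟨G, rfl⟩ := hI
  obtain ⟨H, rfl⟩ := hJ
  have hprod :
      Ideal.span ((fun a => (monomial a (1 : K) : MvPolynomial (Fin n) K)) '' G) *
        Ideal.span ((fun a => (monomial a (1 : K) : MvPolynomial (Fin n) K)) '' H) =
      Ideal.span ((fun a => (monomial a (1 : K) : MvPolynomial (Fin n) K)) ''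
        Set.image2 (· + ·) G H) := by
    rw [Ideal.span_mul_span']
    congr 1
    ext m
    constructor
    · rintro ⟨x, ⟨g, hg, rfl⟩, y, ⟨h, hh, rfl⟩, rfl⟩
      exact ⟨g + h, Set.mem_image2_of_mem hg hh, by simp [monomial_mul]⟩
    · rintro ⟨c, ⟨g, hg, h, hh, rfl⟩, rfl⟩
      exact ⟨monomial g 1, ⟨g, hg, rfl⟩, monomial h 1, ⟨h, hh, rfl⟩,
        by simp [monomial_mul]⟩
  rw [hprod]
  refine ⟨⟨_, rfl⟩, ?_⟩
  intro a ha i j hij hj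
  rw [aux_mem_span_iff] at ha ⊢
  obtain ⟨c, ⟨g, hg, h, hh, rfl⟩, hca⟩ := ha
  have hca' : g + h ≤ a := hca
  have hne : i ≠ j := ne_of_lt hij
  by_cases hcase : (g + h) j < a j
  · exact ⟨g + h, Set.mem_image2_of_mem hg hh, aux_le1 hne hca' hcase⟩
  · have heq : g j + h j = a j := by
      have := Finsupp.le_def.mp hca' j
      simp only [Finsupp.add_apply] at this hcase
      omega
    have : 1 ≤ g j ∨ 1 ≤ h j := by omega
    rcases this with hgj | hhj
    · have hgI : (monomial g (1 : K) : MvPolynomial (Fin n) K) ∈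
          Ideal.span ((fun b => (monomial b (1 : K) : MvPolynomial (Fin n) K)) '' G) :=
        Ideal.subset_span ⟨g, hg, rfl⟩
      have hmem := hsI g hgI i j hij hgj
      rw [aux_mem_span_iff] at hmem
      obtain ⟨g', hg', hg'le⟩ := hmem
      refine ⟨g' + h, Set.mem_image2_of_mem hg' hh, ?_⟩
      exact le_trans (add_le_add hg'le (le_refl h)) (aux_le3 hne hca' hgj)
    · have hhJ : (monomial h (1 : K) : MvPolynomial (Fin n) K) ∈
          Ideal.span ((fun b => (monomial b (1 : K) : MvPolynomial (Fin n) K)) '' H) :=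
        Ideal.subset_span ⟨h, hh, rfl⟩
      have hmem := hsJ h hhJ i j hij hhj
      rw [aux_mem_span_iff] at hmem
      obtain ⟨h', hh', hh'le⟩ := hmem
      refine ⟨g + h', Set.mem_image2_of_mem hg hh', ?_⟩
      have hca'' : h + g ≤ a := by rwa [add_comm]
      have := le_trans (add_le_add hh'le (le_refl g)) (aux_le3 hne hca'' hhj)
      calc g + h' = h' + g := add_comm _ _
        _ ≤ _ := this

/-- Powers of strongly stable monomial ideals are strongly stable monomial ideals. -/
lemma aux_pow {I : Ideal (MvPolynomial (Fin n) K)}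
    (hI : IsMonomialIdeal I) (hsI : IsStronglyStable I) (k : ℕ) (hk : 1 ≤ k) :
    IsMonomialIdeal (I ^ k) ∧ IsStronglyStable (I ^ k) := by
  induction k, hk using Nat.le_induction with
  | base => rw [pow_one]; exact ⟨hI, hsI⟩
  | succ k hk ih =>
    rw [pow_succ]
    exact aux_mul ih.1 hI ih.2 hsI

/-- Iterated strong-stability exchange. -/
lemma aux_iterate {J : Ideal (MvPolynomial (Fin n) K)} (hJ : IsStronglyStable J)
    {i j : Fin n} (hij : i < j) (t : ℕ) :
    ∀ u : Fin n →₀ ℕ, (monomial u (1 : K) : MvPolynomial (Fin n) K) ∈ J → t ≤ u j →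
      (monomial (u - Finsupp.single j t + Finsupp.single i t) (1 : K) :
        MvPolynomial (Fin n) K) ∈ J := by
  have hne : i ≠ j := ne_of_lt hij
  induction t with
  | zero => intro u hu _; simpa using hu
  | succ t ih =>
    intro u hu ht
    have h1 := ih u hu (by omega)
    have hvj : 1 ≤ (u - Finsupp.single j t + Finsupp.single i t) j := by
      rw [aux_apply]
      simp [hne]
      omega
    have h2 := hJ _ h1 i j hij hvj
    have heq : u - Finsupp.single j t + Finsupp.single i t - Finsupp.single j 1 +
        Finsupp.single i 1 = u - Finsupp.single j (t + 1) + Finsupp.single i (t + 1) := by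
      ext x
      simp only [aux_apply]
      rcases eq_or_ne j x with rfl | hjx
      · simp [hne]
        omega
      · rcases eq_or_ne i x with rfl | hix
        · simp [hjx]
          omega
        · simp [hjx, hix]
    rwa [heq] at h2

end Aux

/-- If `I` is a strongly stable monomial ideal, then its integral closure is again a
strongly stable monomial ideal. -/
theorem integralClosure_stronglyStable {K : Type*} [Field K] {n : ℕ}
    (I : Ideal (MvPolynomial (Fin n) K)) (hmon : IsMonomialIdeal I)
    (hSS : IsStronglyStable I) :
    IsMonomialIdeal (monomialIntegralClosure I) ∧
      IsStronglyStable (monomialIntegralClosure I) := by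
  set G' : Set (Fin n →₀ ℕ) :=
    {b | ∃ k : ℕ, 1 ≤ k ∧ (monomial b (1 : K) : MvPolynomial (Fin n) K) ^ k ∈ I ^ k} with hG'
  have hset : monomialIntegralClosure I =
      Ideal.span ((fun b => (monomial b (1 : K) : MvPolynomial (Fin n) K)) '' G') := by
    unfold monomialIntegralClosure
    congr 1
    ext m
    constructor
    · rintro ⟨a, rfl, hk⟩
      exact ⟨a, hk, rfl⟩
    · rintro ⟨a, ha, rfl⟩
      exact ⟨a, rfl, ha⟩
  refine ⟨⟨G', hset⟩, ?_⟩
  intro a ha i j hij hj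
  rw [hset, aux_mem_span_iff] at ha ⊢
  obtain ⟨b, hb, hba⟩ := ha
  have hne : i ≠ j := ne_of_lt hij
  by_cases hcase : b j < a j
  · exact ⟨b, hb, aux_le1 hne hba hcase⟩
  · have heq : b j = a j := le_antisymm (Finsupp.le_def.mp hba j) (not_lt.mp hcase)
    have hbj : 1 ≤ b j := by omega
    obtain ⟨k, hk1, hbk⟩ := hb
    rw [monomial_pow, one_pow] at hbk
    have hpow := aux_pow hmon hSS k hk1
    have hkj : k ≤ (k • b) j := by
      simp only [Finsupp.smul_apply, smul_eq_mul]
      calc k = k * 1 := (mul_one k).symm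
        _ ≤ k * b j := Nat.mul_le_mul_left k hbj
    have hstep := aux_iterate hpow.2 hij k (k • b) hbk hkj
    have hsle : Finsupp.single j 1 ≤ b := Finsupp.single_le_iff.mpr hbj
    have hsmul : k • (b - Finsupp.single j 1 + Finsupp.single i 1) =
        k • b - Finsupp.single j k + Finsupp.single i k := by
      have h1 : k • (b - Finsupp.single j 1) = k • b - k • Finsupp.single j 1 := by
        refine eq_tsub_of_add_eq ?_
        rw [← smul_add, tsub_add_cancel_of_le hsle]
      rw [smul_add, h1, Finsupp.smul_single, Finsupp.smul_single, smul_eq_mul, mul_one]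
    set b' := b - Finsupp.single j 1 + Finsupp.single i 1 with hb'
    have hb'G : b' ∈ G' := by
      refine ⟨k, hk1, ?_⟩
      rw [monomial_pow, one_pow, hb', hsmul]
      exact hstep
    exact ⟨b', hb'G, aux_le2 hba⟩
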